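/- Let α, β ∈ (0,1) with β ≤ α (equivalently 1 < 1/α ≤ 1/β) and let A, B > 0. Define f(κ) = (A + κ)^{1/α} − B·κ^{1/β} for κ ∈ [0,1]. Then f attains its minimum over [0,1] at an endpoint: min_{κ ∈ [0,1]} f(κ) = min( f(0), f(1) ). -/

import Mathlib

/-- Increasing increments for `t ↦ (t+c)^q - t^q` when `q ≥ 1`, `c ≥ 0`. -/
lemma incr_rpow (q c : ℝ) (hq : 1 ≤ q) (hc : 0 ≤ c) :
    MonotoneOn (fun t : ℝ => (t + c) ^ q - t ^ q) (Set.Ici (0 : ℝ)) := by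
  have key : ∀ t : ℝ, HasDerivAt (fun t : ℝ => (t + c) ^ q - t ^ q)
      (q * (t + c) ^ (q - 1) - q * t ^ (q - 1)) t := by
    intro t
    have h1 : HasDerivAt (fun t : ℝ => t + c) 1 t :=
      (hasDerivAt_id t).add_const c
    have h2 : HasDerivAt (fun t : ℝ => (t + c) ^ q) (1 * q * (t + c) ^ (q - 1)) t :=
      h1.rpow_const (Or.inr hq)
    have h3 : HasDerivAt (fun t : ℝ => t ^ q) (1 * q * t ^ (q - 1)) t :=
      (hasDerivAt_id t).rpow_const (Or.inr hq)
    have h4 : HasDerivAt (fun t : ℝ => (t + c) ^ q - t ^ q)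
      (1 * q * (t + c) ^ (q - 1) - 1 * q * t ^ (q - 1)) t := h2.sub h3
    rw [one_mul] at h4; exact h4
  apply monotoneOn_of_deriv_nonneg (convex_Ici 0)
  · exact fun t _ => ((key t).differentiableAt).continuousAt.continuousWithinAt
  · intro t ht
    exact ((key t).differentiableAt).differentiableWithinAt
  · intro t ht
    rw [interior_Ici] at ht
    rw [(key t).deriv]
    have h0 : (0 : ℝ) ≤ t := le_of_lt ht
    have : t ^ (q - 1) ≤ (t + c) ^ (q - 1) :=
      Real.rpow_le_rpow h0 (by linarith) (by linarith)
    have hq0 : (0 : ℝ) ≤ q := by linarith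
    nlinarith

/-- for `β ≤ α` in `(0,1)` and `A, B > 0`, the function
`f(κ) = (A + κ)^{1/α} − B·κ^{1/β}` attains its minimum over `[0,1]` at an endpoint:
the minimum equals `min (f 0) (f 1)`. -/
theorem endpoint_minimum (α β A B : ℝ)
    (hα0 : 0 < α) (hα1 : α < 1) (hβ0 : 0 < β) (hβ1 : β < 1) (hβα : β ≤ α)
    (hA : 0 < A) (hB : 0 < B) :
    IsLeast ((fun κ : ℝ => (A + κ) ^ (1 / α) - B * κ ^ (1 / β)) '' Set.Icc (0 : ℝ) 1)
      (min ((A + 0) ^ (1 / α) - B * (0 : ℝ) ^ (1 / β))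
        ((A + 1) ^ (1 / α) - B * (1 : ℝ) ^ (1 / β))) := by
  set q := 1 / α with hqdef
  set p := 1 / β with hpdef
  have hq1 : 1 < q := one_lt_one_div hα0 hα1
  have hp1 : 1 < p := one_lt_one_div hβ0 hβ1
  have hqp : q ≤ p := one_div_le_one_div_of_le hβ0 hβα
  constructor
  · -- membership: min of the two endpoint values is attained at 0 or 1
    rcases le_total ((A + 0) ^ q - B * (0 : ℝ) ^ p) ((A + 1) ^ q - B * (1 : ℝ) ^ p) with h | h
    · rw [min_eq_left h]
      exact ⟨0, Set.left_mem_Icc.mpr zero_le_one, rfl⟩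
    · rw [min_eq_right h]
      exact ⟨1, Set.right_mem_Icc.mpr zero_le_one, rfl⟩
  · rintro y ⟨κ, ⟨hκ0, hκ1⟩, rfl⟩
    simp only
    by_contra hcon
    push_neg at hcon
    rw [lt_min_iff] at hcon
    obtain ⟨h0, h1⟩ := hcon
    rcases eq_or_lt_of_le hκ0 with rfl | hκ0'
    · exact lt_irrefl _ h0
    rcases eq_or_lt_of_le hκ1 with rfl | hκ1'
    · exact lt_irrefl _ h1
    -- now 0 < κ < 1
    have hzp : (0 : ℝ) ^ p = 0 := Real.zero_rpow (by positivity)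
    have hop : (1 : ℝ) ^ p = 1 := Real.one_rpow p
    rw [add_zero, hzp, mul_zero, sub_zero] at h0
    rw [hop, mul_one] at h1
    -- KEY inequality: (A+κ)^q - A^q ≥ κ^p ((A+1)^q - A^q)
    have hAκ : (0 : ℝ) ≤ A := le_of_lt hA
    have hκp_le : κ ^ p ≤ κ ^ q :=
      Real.rpow_le_rpow_of_exponent_ge hκ0' (le_of_lt hκ1') hqp
    have hAq_le : A ^ q ≤ (A + 1) ^ q :=
      Real.rpow_le_rpow hAκ (by linarith) (by linarith)
    have hmono := incr_rpow q κ (le_of_lt hq1) (le_of_lt hκ0')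
    have hstep : (κ * A + κ) ^ q - (κ * A) ^ q ≤ (A + κ) ^ q - A ^ q := by
      have := hmono (Set.mem_Ici.mpr (by positivity : (0:ℝ) ≤ κ * A))
        (Set.mem_Ici.mpr hAκ)
        (by nlinarith : κ * A ≤ A)
      simpa using this
    have hmul1 : (κ * (A + 1)) ^ q = κ ^ q * (A + 1) ^ q :=
      Real.mul_rpow (le_of_lt hκ0') (by linarith)
    have hmul2 : (κ * A) ^ q = κ ^ q * A ^ q :=
      Real.mul_rpow (le_of_lt hκ0') hAκ
    have hkey : κ ^ p * ((A + 1) ^ q - A ^ q) ≤ (A + κ) ^ q - A ^ q := by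
      have e1 : κ ^ p * ((A + 1) ^ q - A ^ q) ≤ κ ^ q * ((A + 1) ^ q - A ^ q) := by
        apply mul_le_mul_of_nonneg_right hκp_le (by linarith)
      have e2 : κ ^ q * ((A + 1) ^ q - A ^ q) = (κ * A + κ) ^ q - (κ * A) ^ q := by
        rw [mul_sub, ← hmul1, ← hmul2]; ring_nf
      linarith
    -- From h0: (A+κ)^q - A^q < B κ^p
    have hb1 : (A + κ) ^ q - A ^ q < B * κ ^ p := by linarith
    -- From h1: B (1 - κ^p) < (A+1)^q - (A+κ)^q
    have hb2 : B * (1 - κ ^ p) < (A + 1) ^ q - (A + κ) ^ q := by linarith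
    have hκpp : (0 : ℝ) < κ ^ p := Real.rpow_pos_of_pos hκ0' p
    have hκp1 : κ ^ p < 1 :=
      Real.rpow_lt_one (le_of_lt hκ0') hκ1' (by linarith)
    -- B > (A+1)^q - A^q
    have hBgt : (A + 1) ^ q - A ^ q < B := by
      have : κ ^ p * ((A + 1) ^ q - A ^ q) < B * κ ^ p := lt_of_le_of_lt hkey hb1
      nlinarith
    -- B < (A+1)^q - A^q
    have hBlt : B < (A + 1) ^ q - A ^ q := by
      have : (A + 1) ^ q - (A + κ) ^ q ≤ (1 - κ ^ p) * ((A + 1) ^ q - A ^ q) := by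
        nlinarith [hkey]
      nlinarith
    linarith
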